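/- Let V, W be finite-dimensional real vector spaces and h : V × V → W a symmetric bilinear map whose image spans a subspace of dimension exactly 2, with dim V ≥ 2. Then there exists an open dense subset U ⊂ V such that for every u ∈ U, the linear map v ↦ h(u,v) is onto the span of the image of h. -/

import Mathlib

open Submodule

private lemma exists_dual_pair' {W : Type*} [AddCommGroup W] [Module ℝ W]
    {w1 w2 : W} (hli : LinearIndependent ℝ ![w1, w2]) :
    ∃ φ1 φ2 : W →ₗ[ℝ] ℝ, φ1 w1 = 1 ∧ φ1 w2 = 0 ∧ φ2 w1 = 0 ∧ φ2 w2 = 1 := by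
  set L := Finsupp.linearCombination ℝ ![w1, w2] with hL
  have hinj : LinearMap.ker L = ⊥ :=
    LinearMap.ker_eq_bot.mpr hli
  obtain ⟨g, hg⟩ := L.exists_leftInverse_of_injective hinj
  have key : ∀ j : Fin 2, g (![w1, w2] j) = Finsupp.single j 1 := by
    intro j
    have h1 : L (Finsupp.single j 1) = ![w1, w2] j := by simp [hL]
    calc g (![w1, w2] j) = (g.comp L) (Finsupp.single j 1) := by
          rw [LinearMap.comp_apply, h1]
      _ = Finsupp.single j 1 := by rw [hg]; rfl
  have k0 : g w1 = Finsupp.single (0 : Fin 2) 1 := by simpa using key 0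
  have k1 : g w2 = Finsupp.single (1 : Fin 2) 1 := by simpa using key 1
  refine ⟨(Finsupp.lapply 0).comp g, (Finsupp.lapply 1).comp g, ?_, ?_, ?_, ?_⟩ <;>
    simp [LinearMap.comp_apply, k0, k1, Finsupp.single_apply]

/-- If a symmetric bilinear map has span of image of dimension ≥ 2, some slice has two
linearly independent values. -/
private lemma exists_good_slice {V W : Type*} [AddCommGroup V] [Module ℝ V]
    [AddCommGroup W] [Module ℝ W] [FiniteDimensional ℝ W]
    (h : V →ₗ[ℝ] V →ₗ[ℝ] W) (hsymm : ∀ u v : V, h u v = h v u)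
    (hrank : Module.finrank ℝ (span ℝ {w : W | ∃ u v : V, h u v = w}) = 2) :
    ∃ u0 v1 v2 : V, LinearIndependent ℝ ![h u0 v1, h u0 v2] := by
  by_contra hc
  push_neg at hc
  -- Step 1: some diagonal value is nonzero
  have hne : ∃ a : V, h a a ≠ 0 := by
    by_contra hd
    push_neg at hd
    have hzero : ∀ u v : V, h u v = 0 := by
      intro u v
      have e : h (u + v) (u + v) = 0 := hd (u + v)
      simp only [map_add, LinearMap.add_apply, hd u, hd v, hsymm v u, zero_add, add_zero] at e
      have e2 : (2 : ℝ) • h u v = 0 := by rw [two_smul]; exact e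
      simpa using (smul_eq_zero.mp e2).resolve_left (by norm_num)
    have hbot : span ℝ {w : W | ∃ u v : V, h u v = w} ≤ ⊥ := by
      rw [span_le]
      rintro w ⟨u, v, rfl⟩
      simp [hzero u v]
    rw [le_bot_iff] at hbot
    rw [hbot] at hrank
    simp at hrank
  obtain ⟨a, ha⟩ := hne
  set w := h a a with hw
  -- every slice lies on a line
  have hline : ∀ u x y : V, h u x ≠ 0 → h u y ∈ ℝ ∙ (h u x) := by
    intro u x y hx
    have hnli := hc u x y
    rw [LinearIndependent.pair_iff' hx] at hnli
    push_neg at hnli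
    obtain ⟨c, hcv⟩ := hnli
    exact mem_span_singleton.mpr ⟨c, hcv⟩
  -- all diagonal values lie on the line of w
  have hvv : ∀ v : V, h v v ∈ ℝ ∙ w := by
    intro v
    obtain ⟨α, hα⟩ := mem_span_singleton.mp (hline a a v ha)
    obtain ⟨t, ht0, ht1⟩ : ∃ t : ℝ, t ≠ 0 ∧ 1 + t * α ≠ 0 := by
      by_cases hα1 : 1 + α = 0
      · refine ⟨1/2, by norm_num, ?_⟩
        have : α = -1 := by linarith
        rw [this]; norm_num
      · exact ⟨1, one_ne_zero, by simpa using hα1⟩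
    set u := a + t • v with hu
    have hua : h u a = (1 + t * α) • w := by
      simp only [hu, map_add, map_smul, LinearMap.add_apply, LinearMap.smul_apply]
      rw [hsymm v a, ← hα, ← hw]
      module
    have hua_ne : h u a ≠ 0 := by
      rw [hua]
      exact smul_ne_zero ht1 ha
    have huu : h u u = w + (2 * t * α) • w + (t * t) • h v v := by
      simp only [hu, map_add, map_smul, LinearMap.add_apply, LinearMap.smul_apply]
      rw [hsymm v a, ← hα, ← hw]
      module
    have h1 : h u u ∈ ℝ ∙ w := by
      obtain ⟨d, hd⟩ := mem_span_singleton.mp (hline u a u hua_ne)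
      exact mem_span_singleton.mpr ⟨d * (1 + t * α), by rw [← hd, hua, smul_smul]⟩
    have h2 : (t * t) • h v v ∈ ℝ ∙ w := by
      have e : (t * t) • h v v = h u u - (1 + 2 * t * α) • w := by
        rw [huu]; module
      rw [e]
      exact sub_mem h1 (smul_mem _ _ (mem_span_singleton_self w))
    have h3 := smul_mem (ℝ ∙ w) (t * t)⁻¹ h2
    rwa [inv_smul_smul₀ (mul_ne_zero ht0 ht0)] at h3
  -- then all values lie on the line of w
  have hall : ∀ x y : V, h x y ∈ ℝ ∙ w := by
    intro x y
    have e : (2 : ℝ) • h x y = h (x + y) (x + y) - h x x - h y y := by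
      simp only [map_add, LinearMap.add_apply]
      rw [hsymm y x]
      module
    have mem2 : (2 : ℝ) • h x y ∈ ℝ ∙ w := by
      rw [e]
      exact sub_mem (sub_mem (hvv (x + y)) (hvv x)) (hvv y)
    have h3 := smul_mem (ℝ ∙ w) (2 : ℝ)⁻¹ mem2
    rwa [inv_smul_smul₀ (by norm_num) ] at h3
  have hle : span ℝ {z : W | ∃ u v : V, h u v = z} ≤ ℝ ∙ w := by
    rw [span_le]
    rintro z ⟨u, v, rfl⟩
    exact hall u v
  have := Submodule.finrank_mono hle
  rw [hrank, finrank_span_singleton ha] at this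
  omega

theorem rank_two_bilinear_slice_generic
    {V W : Type*} [NormedAddCommGroup V] [NormedSpace ℝ V] [FiniteDimensional ℝ V]
    [AddCommGroup W] [Module ℝ W] [FiniteDimensional ℝ W]
    (h : V →ₗ[ℝ] V →ₗ[ℝ] W)
    (hsymm : ∀ u v : V, h u v = h v u)
    (hdimV : 2 ≤ Module.finrank ℝ V)
    (hrank : Module.finrank ℝ (span ℝ {w : W | ∃ u v : V, h u v = w}) = 2) :
    ∃ U : Set V, IsOpen U ∧ Dense U ∧
      ∀ u ∈ U, LinearMap.range (h u) = span ℝ {w : W | ∃ u' v : V, h u' v = w} := by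
  obtain ⟨u0, v1, v2, hli⟩ := exists_good_slice h hsymm hrank
  obtain ⟨φ1, φ2, hφ11, hφ12, hφ21, hφ22⟩ := exists_dual_pair' hli
  set p : V → ℝ := fun u => φ1 (h u v1) * φ2 (h u v2) - φ2 (h u v1) * φ1 (h u v2) with hp
  have cont : Continuous p := by
    have c1 : Continuous fun u : V => φ1 (h u v1) := by
      simpa [LinearMap.comp_apply, LinearMap.flip_apply, Function.comp_def] using
        (φ1.comp (h.flip v1)).continuous_of_finiteDimensional
    have c2 : Continuous fun u : V => φ2 (h u v2) := by
      simpa [LinearMap.comp_apply, LinearMap.flip_apply, Function.comp_def] using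
        (φ2.comp (h.flip v2)).continuous_of_finiteDimensional
    have c3 : Continuous fun u : V => φ2 (h u v1) := by
      simpa [LinearMap.comp_apply, LinearMap.flip_apply, Function.comp_def] using
        (φ2.comp (h.flip v1)).continuous_of_finiteDimensional
    have c4 : Continuous fun u : V => φ1 (h u v2) := by
      simpa [LinearMap.comp_apply, LinearMap.flip_apply, Function.comp_def] using
        (φ1.comp (h.flip v2)).continuous_of_finiteDimensional
    exact (c1.mul c2).sub (c3.mul c4)
  have hq : ∀ (x : V) (t : ℝ),
      p (x + t • u0) = t * t + t * (φ1 (h x v1) + φ2 (h x v2)) + p x := by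
    intro x t
    simp only [hp, map_add, map_smul, LinearMap.add_apply, LinearMap.smul_apply, smul_eq_mul,
      hφ11, hφ12, hφ21, hφ22]
    ring
  refine ⟨{u : V | p u ≠ 0}, ?_, ?_, ?_⟩
  · have : {u : V | p u ≠ 0} = p ⁻¹' ({0}ᶜ) := rfl
    rw [this]
    exact isOpen_compl_singleton.preimage cont
  · rw [Metric.dense_iff]
    intro x r hr
    set c := ‖u0‖ + 1 with hc
    have hcpos : (0 : ℝ) < c := by positivity
    have key : ∃ t : ℝ, 0 < t ∧ t * c < r ∧ p (x + t • u0) ≠ 0 := by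
      by_contra hcon
      push_neg at hcon
      set b := φ1 (h x v1) + φ2 (h x v2) with hb
      have root : ∀ t : ℝ, 0 < t → t * c < r → t * t + t * b + p x = 0 := by
        intro t h1 h2
        have := hcon t h1 h2
        rwa [hq x t] at this
      have hval : ∀ k : ℝ, 2 ≤ k → (r / (k * c)) * c < r ∧ 0 < r / (k * c) := by
        intro k hk
        have hkc : (0:ℝ) < k * c := by positivity
        constructor
        · have e : (r / (k * c)) * c = r / k := by
            field_simp
          rw [e]
          have : r / k < r / 1 := by
            apply div_lt_div_of_pos_left hr one_pos
            linarith
          simpa using this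
        · positivity
      have e2 := root (r / (2 * c)) (hval 2 (by norm_num)).2 (hval 2 (by norm_num)).1
      have e3 := root (r / (3 * c)) (hval 3 (by norm_num)).2 (hval 3 (by norm_num)).1
      have e4 := root (r / (4 * c)) (hval 4 (by norm_num)).2 (hval 4 (by norm_num)).1
      set t2 := r / (2 * c)
      set t3 := r / (3 * c)
      set t4 := r / (4 * c)
      have h23 : t3 < t2 := by
        apply div_lt_div_of_pos_left hr (by positivity)
        linarith
      have h34 : t4 < t3 := by
        apply div_lt_div_of_pos_left hr (by positivity)
        linarith
      have f1 : (t2 - t3) * (t2 + t3 + b) = 0 := by linear_combination e2 - e3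
      have f2 : (t2 - t4) * (t2 + t4 + b) = 0 := by linear_combination e2 - e4
      have g1 : t2 + t3 + b = 0 :=
        (mul_eq_zero.mp f1).resolve_left (by intro hz; nlinarith)
      have g2 : t2 + t4 + b = 0 :=
        (mul_eq_zero.mp f2).resolve_left (by intro hz; nlinarith)
      nlinarith
    obtain ⟨t, ht0, htc, htp⟩ := key
    refine ⟨x + t • u0, ?_, htp⟩
    rw [Metric.mem_ball, dist_eq_norm]
    have e : x + t • u0 - x = t • u0 := by abel
    rw [e, norm_smul, Real.norm_eq_abs]
    have : |t| * ‖u0‖ ≤ t * c := by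
      rw [abs_of_pos ht0]
      apply mul_le_mul_of_nonneg_left _ ht0.le
      simp [hc]
    linarith
  · intro u hu
    have hpu : p u ≠ 0 := hu
    have hle : LinearMap.range (h u) ≤ span ℝ {w : W | ∃ u' v : V, h u' v = w} := by
      rintro z ⟨v, rfl⟩
      exact subset_span ⟨u, v, rfl⟩
    have hli2 : LinearIndependent ℝ ![h u v1, h u v2] := by
      rw [LinearIndependent.pair_iff]
      intro s t hst
      have e1 : s * φ1 (h u v1) + t * φ1 (h u v2) = 0 := by
        have := congrArg φ1 hst
        simpa [map_add, map_smul] using this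
      have e2 : s * φ2 (h u v1) + t * φ2 (h u v2) = 0 := by
        have := congrArg φ2 hst
        simpa [map_add, map_smul] using this
      constructor
      · have hs : s * p u = 0 := by
          simp only [hp]
          linear_combination φ2 (h u v2) * e1 - φ1 (h u v2) * e2
        exact (mul_eq_zero.mp hs).resolve_right hpu
      · have ht : t * p u = 0 := by
          simp only [hp]
          linear_combination φ1 (h u v1) * e2 - φ2 (h u v1) * e1
        exact (mul_eq_zero.mp ht).resolve_right hpu
    have hspan_le : span ℝ (Set.range ![h u v1, h u v2]) ≤ LinearMap.range (h u) := by
      rw [span_le]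
      rintro z ⟨i, rfl⟩
      fin_cases i
      · exact ⟨v1, rfl⟩
      · exact ⟨v2, rfl⟩
    have h2le : 2 ≤ Module.finrank ℝ (LinearMap.range (h u)) := by
      have e := finrank_span_eq_card hli2
      have := Submodule.finrank_mono hspan_le
      rw [e] at this
      simpa using this
    exact Submodule.eq_of_le_of_finrank_le hle (by rw [hrank]; exact h2le)
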